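/- Under the affine flow, in which a plane curve moves in the direction of its curvature vector with speed equal to the cube root of its curvature, an ellipse remains an ellipse of the same eccentricity: the family of curves c(t,θ) = λ(t)·(a cos θ, b sin θ), with λ(t) = (1 − (4/3)(ab)^{-2/3} t)^{3/4}, has normal velocity equal to κ^{1/3} times the unit normal pointing in the direction of the curvature vector. -/

import Mathlib

open Real

/-- Under the affine normal flow (velocity `κ^{1/3} N`, `N` the inward unit normal), an
ellipse remains an ellipse of the same eccentricity: the family
`c(t,θ) = λ(t)·(a cos θ, b sin θ)` with `λ(t) = (1 − (4/3)(ab)^{-2/3} t)^{3/4}` has normal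
velocity equal to `κ^{1/3}`, where `κ` is the curvature of the curve `c(t,·)`. -/
theorem ellipse_remains_ellipse_under_affine_flow (a b : ℝ) (ha : 0 < a) (hb : 0 < b)
    (lam : ℝ → ℝ)
    (hlam : ∀ t, lam t = (1 - (4 / 3) * (a * b) ^ (-(2 : ℝ) / 3) * t) ^ ((3 : ℝ) / 4))
    (dlam : ℝ → ℝ)
    (hdlam : ∀ t, dlam t = -((a * b) ^ (-(2 : ℝ) / 3)) * (lam t) ^ (-(1 : ℝ) / 3))
    (c : ℝ → ℝ → EuclideanSpace ℝ (Fin 2))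
    (hc : ∀ t θ, c t θ = lam t •
      (WithLp.toLp 2 ![a * Real.cos θ, b * Real.sin θ] : EuclideanSpace ℝ (Fin 2)))
    -- the velocity vector field `∂c/∂t = λ'(t)·(a cos θ, b sin θ)`
    (V : ℝ → ℝ → EuclideanSpace ℝ (Fin 2))
    (hV : ∀ t θ, V t θ = dlam t •
      (WithLp.toLp 2 ![a * Real.cos θ, b * Real.sin θ] : EuclideanSpace ℝ (Fin 2)))
    -- the curvature of the ellipse `c(t,·)` (semi-axes `λ(t)a`, `λ(t)b`) at parameter `θ`
    (κ : ℝ → ℝ → ℝ)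
    (hκ : ∀ t θ, κ t θ = (lam t * a) * (lam t * b) /
      ((lam t * a) ^ 2 * Real.sin θ ^ 2 + (lam t * b) ^ 2 * Real.cos θ ^ 2) ^ ((3 : ℝ) / 2))
    -- the inward unit normal of `c(t,·)` at parameter `θ`
    (N : ℝ → ℝ → EuclideanSpace ℝ (Fin 2))
    (hN : ∀ t θ, N t θ =
      (-(1 / Real.sqrt ((lam t * b) ^ 2 * Real.cos θ ^ 2 + (lam t * a) ^ 2 * Real.sin θ ^ 2))) •
        (WithLp.toLp 2 ![lam t * b * Real.cos θ, lam t * a * Real.sin θ] : EuclideanSpace ℝ (Fin 2))) :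
    ∀ t ∈ Set.Ico (0 : ℝ) ((3 / 4) * (a * b) ^ ((2 : ℝ) / 3)), ∀ θ : ℝ,
      HasDerivAt (fun s => c s θ) (V t θ) t ∧
        (inner ℝ (V t θ) (N t θ) : ℝ) = (κ t θ) ^ ((1 : ℝ) / 3) := by
  intro t ht θ
  obtain ⟨ht0, ht1⟩ := ht
  have hab : (0:ℝ) < a * b := mul_pos ha hb
  set A : ℝ := (a * b) ^ (-(2 : ℝ) / 3) with hA
  have hApos : 0 < A := rpow_pos_of_pos hab _
  have hAinv : A * (a * b) ^ ((2 : ℝ) / 3) = 1 := by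
    rw [hA, ← Real.rpow_add hab]; norm_num
  have hu : 0 < 1 - (4 / 3) * A * t := by
    have h1 : (4 / 3) * A * t < (4 / 3) * A * ((3 / 4) * (a * b) ^ ((2 : ℝ) / 3)) :=
      mul_lt_mul_of_pos_left ht1 (by positivity)
    have h2 : (4 / 3) * A * ((3 / 4) * (a * b) ^ ((2 : ℝ) / 3)) = 1 := by
      rw [show (4:ℝ) / 3 * A * (3 / 4 * (a * b) ^ ((2 : ℝ) / 3))
          = A * (a * b) ^ ((2 : ℝ) / 3) by ring, hAinv]
    linarith
  set u : ℝ := 1 - (4 / 3) * A * t with hu'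
  have hLu : lam t = u ^ ((3:ℝ)/4) := hlam t
  have hLpos : 0 < lam t := by rw [hLu]; exact rpow_pos_of_pos hu _
  have hdl : dlam t = -A * u ^ (-(1:ℝ)/4) := by
    rw [hdlam t, hLu, ← Real.rpow_mul hu.le]
    norm_num
  constructor
  · -- the time derivative
    have h1 : HasDerivAt (fun s : ℝ => 1 - (4 / 3) * A * s) (-((4/3) * A)) t := by
      simpa using ((hasDerivAt_id' t).const_mul ((4/3) * A)).const_sub (1:ℝ)
    have h2 := h1.rpow_const (p := (3:ℝ)/4) (Or.inl hu.ne')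
    have h3 := h2.smul_const (F := EuclideanSpace ℝ (Fin 2))
      (WithLp.toLp 2 ![a * Real.cos θ, b * Real.sin θ] : EuclideanSpace ℝ (Fin 2))
    have heq : (fun s => c s θ)
        = fun s => ((1 - (4 / 3) * A * s) ^ ((3:ℝ)/4)) •
          (WithLp.toLp 2 ![a * Real.cos θ, b * Real.sin θ] : EuclideanSpace ℝ (Fin 2)) := by
      funext s; rw [hc s θ, hlam s]
    have hscal : -A * u ^ (-(1:ℝ)/4)
        = -(4 / 3 * A) * (3 / 4) * (1 - 4 / 3 * A * t) ^ ((3:ℝ)/4 - 1) := by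
      rw [← hu', show (3:ℝ)/4 - 1 = -(1:ℝ)/4 by norm_num]; ring
    rw [heq, hV t θ, hdl, hscal]
    exact h3
  · -- the normal velocity identity
    set P : ℝ := a ^ 2 * Real.sin θ ^ 2 + b ^ 2 * Real.cos θ ^ 2 with hP
    have hPpos : 0 < P := by
      have h := sin_sq_add_cos_sq θ
      rcases lt_or_ge (a^2) (b^2) with hcase | hcase
      · nlinarith [sq_nonneg (Real.sin θ), sq_nonneg (Real.cos θ)]
      · nlinarith [sq_nonneg (Real.sin θ), sq_nonneg (Real.cos θ)]
    have hL0 : lam t ≠ 0 := hLpos.ne'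
    have hP120 : P ^ ((1:ℝ)/2) ≠ 0 := (rpow_pos_of_pos hPpos _).ne'
    have hE : (lam t * b) ^ 2 * Real.cos θ ^ 2 + (lam t * a) ^ 2 * Real.sin θ ^ 2
        = (lam t) ^ 2 * P := by rw [hP]; ring
    have hE' : (lam t * a) ^ 2 * Real.sin θ ^ 2 + (lam t * b) ^ 2 * Real.cos θ ^ 2
        = (lam t) ^ 2 * P := by rw [hP]; ring
    have hsqrtE : Real.sqrt ((lam t) ^ 2 * P) = lam t * P ^ ((1:ℝ)/2) := by
      rw [Real.sqrt_eq_rpow, Real.mul_rpow (by positivity) hPpos.le,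
        ← Real.rpow_natCast (lam t) 2, ← Real.rpow_mul hLpos.le]
      norm_num
    have hinner : (inner ℝ (V t θ) (N t θ) : ℝ)
        = A * u ^ (-(1:ℝ)/4) * lam t * (a * b) / (lam t * P ^ ((1:ℝ)/2)) := by
      rw [hV t θ, hN t θ, hE, hsqrtE]
      simp only [PiLp.inner_apply, PiLp.smul_apply, Pi.smul_apply, smul_eq_mul,
        Fin.sum_univ_two, PiLp.toLp_apply, Matrix.smul_cons, Matrix.smul_empty,
        Matrix.cons_val_zero, Matrix.cons_val_one, Matrix.head_cons, RCLike.inner_apply,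
        conj_trivial, hdl]
      have h := sin_sq_add_cos_sq θ
      linear_combination (A * u ^ (-(1:ℝ)/4) * lam t * a * b / (lam t * P ^ ((1:ℝ)/2))) * h
    have hA3 : A * (a * b) = (a * b) ^ ((1:ℝ)/3) := by
      rw [hA, show (a*b)^((1:ℝ)/3) = (a*b)^(-(2:ℝ)/3 + 1) by norm_num,
        Real.rpow_add hab, Real.rpow_one]
    have hL2 : A * u ^ (-(1:ℝ)/4) * lam t * (a * b) / (lam t * P ^ ((1:ℝ)/2))
        = (a * b) ^ ((1:ℝ)/3) * u ^ (-(1:ℝ)/4) * P ^ (-(1:ℝ)/2) := by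
      rw [show (-(1:ℝ)/2) = -((1:ℝ)/2) by norm_num, Real.rpow_neg hPpos.le, ← hA3]
      field_simp
    have hR : (κ t θ) ^ ((1:ℝ)/3)
        = (a * b) ^ ((1:ℝ)/3) * u ^ (-(1:ℝ)/4) * P ^ (-(1:ℝ)/2) := by
      rw [hκ t θ, hE']
      have e1 : ((lam t) ^ 2 * P) ^ ((3:ℝ)/2) = (lam t) ^ ((3:ℝ)) * P ^ ((3:ℝ)/2) := by
        rw [Real.mul_rpow (by positivity) hPpos.le, ← Real.rpow_natCast (lam t) 2,
          ← Real.rpow_mul hLpos.le]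
        norm_num
      have e2 : (lam t * a) * (lam t * b) / ((lam t) ^ ((3:ℝ)) * P ^ ((3:ℝ)/2))
          = (a * b) * (lam t) ^ (-(1:ℝ)) * P ^ (-((3:ℝ)/2)) := by
        rw [Real.rpow_neg hLpos.le, Real.rpow_neg hPpos.le, Real.rpow_one,
          show (lam t) ^ ((3:ℝ)) = (lam t) ^ (3:ℕ) from Real.rpow_natCast _ 3]
        have h32 : P ^ ((3:ℝ)/2) ≠ 0 := (rpow_pos_of_pos hPpos _).ne'
        field_simp
      rw [e1, e2, Real.mul_rpow (by positivity) (by positivity),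
        Real.mul_rpow (by positivity) (by positivity),
        ← Real.rpow_mul hLpos.le, ← Real.rpow_mul hPpos.le, hLu,
        ← Real.rpow_mul hu.le]
      norm_num
    rw [hinner, hL2, hR]
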